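/- Dual Ky Fan inequality: if f is supermodular on a distributive lattice, then for any x₁,…,x_q and 1 ≤ p ≤ q, Σ_{1≤i₁<⋯<i_p≤q} f(x_{i₁} ∨ ⋯ ∨ x_{i_p}) ≤ Σ_{k=p}^q C(k−1, p−1) f(⋀_{1≤i₁<⋯<i_k≤q} (x_{i₁} ∨ ⋯ ∨ x_{i_k})). -/

import Mathlib

open Finset

section FanAux

variable {ι : Type*} {𝕃 : Type*} [DistribLattice 𝕃] [Nonempty 𝕃]

/-- `sup'` with a junk value on the empty set. -/
noncomputable def fanG (a : ι → 𝕃) (t : Finset ι) : 𝕃 :=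
  if h : t.Nonempty then t.sup' h a else Classical.arbitrary 𝕃

lemma fanG_eq (a : ι → 𝕃) {t : Finset ι} (h : t.Nonempty) : fanG a t = t.sup' h a := dif_pos h

/-- `inf'` with a junk value on the empty set. -/
noncomputable def fanH (a : ι → 𝕃) (t : Finset ι) : 𝕃 :=
  if h : t.Nonempty then t.inf' h a else Classical.arbitrary 𝕃

lemma fanH_eq (a : ι → 𝕃) {t : Finset ι} (h : t.Nonempty) : fanH a t = t.inf' h a := dif_pos h

lemma fanG_mono (a : ι → 𝕃) {s t : Finset ι} (hs : s.Nonempty) (hst : s ⊆ t) :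
    fanG a s ≤ fanG a t := by
  rw [fanG_eq a hs, fanG_eq a (hs.mono hst)]
  exact sup'_le _ _ fun i hi => le_sup' a (hst hi)

/-- The `(j+1)`-st "order statistic" of the family `a` over `A`:
inf over `(j+1)`-subsets of the sup. -/
noncomputable def fanD (a : ι → 𝕃) (A : Finset ι) (j : ℕ) : 𝕃 :=
  if h : j + 1 ≤ A.card then
    (A.powersetCard (j + 1)).inf' (powersetCard_nonempty.2 h) (fanG a)
  else fanG a A

lemma fanD_of_ge (a : ι → 𝕃) (A : Finset ι) {j : ℕ} (h : A.card ≤ j + 1) :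
    fanD a A j = fanG a A := by
  rw [fanD]
  split_ifs with h'
  · have e : j + 1 = A.card := le_antisymm h' h
    refine le_antisymm ?_ ?_
    · exact inf'_le _ (by rw [e, powersetCard_self]; exact mem_singleton_self A)
    · refine le_inf' _ _ fun T hT => ?_
      have := mem_powersetCard.mp hT
      rw [eq_of_subset_of_card_le this.1 (by omega)]
  · rfl

lemma fanD_le_succ (a : ι → 𝕃) (A : Finset ι) (j : ℕ) :
    fanD a A j ≤ fanD a A (j + 1) := by
  by_cases h2 : j + 2 ≤ A.card
  · rw [fanD, dif_pos (by omega : j + 1 ≤ A.card), fanD, dif_pos h2]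
    refine le_inf' _ _ fun T' hT' => ?_
    obtain ⟨hT'A, hT'c⟩ := mem_powersetCard.mp hT'
    obtain ⟨T, hTT', hTc⟩ := exists_subset_card_eq (show j + 1 ≤ T'.card by omega)
    have hTmem : T ∈ A.powersetCard (j + 1) :=
      mem_powersetCard.mpr ⟨hTT'.trans hT'A, hTc⟩
    exact (inf'_le _ hTmem).trans (fanG_mono a (card_pos.mp (by omega)) hTT')
  · rw [fanD_of_ge a A (by omega : A.card ≤ j + 1 + 1)]
    by_cases h1 : j + 1 ≤ A.card
    · rw [fanD, dif_pos h1]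
      obtain ⟨T, hTA, hTc⟩ := exists_subset_card_eq h1
      have hTmem : T ∈ A.powersetCard (j + 1) := mem_powersetCard.mpr ⟨hTA, hTc⟩
      exact (inf'_le _ hTmem).trans (fanG_mono a (card_pos.mp (by omega)) hTA)
    · rw [fanD, dif_neg h1]

lemma fanD_mono (a : ι → 𝕃) (A : Finset ι) : Monotone (fanD a A) :=
  monotone_nat_of_le_succ (fanD_le_succ a A)

/-- The transformed chain. -/
noncomputable def fanE (m : ℕ) (d : ℕ → 𝕃) (c : 𝕃) (j : ℕ) : 𝕃 :=
  if j = 0 then (if m = 0 then c else d 0 ⊓ c)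
  else if j = m then d (m - 1) ⊔ c
  else d j ⊓ (d (j - 1) ⊔ c)

lemma fanE_succ (m : ℕ) (d : ℕ → 𝕃) (c : 𝕃) (hd : Monotone d) (j : ℕ) (hj : j ≤ m) :
    fanE (m + 1) d c (j + 1) = fanE m (fun i => d (i + 1)) (d 0 ⊔ c) j := by
  unfold fanE
  by_cases h0 : j = 0
  · subst h0
    by_cases hm : m = 0
    · subst hm; simp
    · simp only [if_neg (by omega : (1 : ℕ) ≠ 0), if_neg (by omega : (1 : ℕ) ≠ m + 1),
        if_pos rfl, if_neg hm]
      norm_num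
  · by_cases hm : j = m
    · subst hm
      simp only [if_neg (by omega : j + 1 ≠ 0), if_pos rfl, if_neg h0]
      have e : j - 1 + 1 = j := by omega
      rw [e]
      simp only [Nat.add_sub_cancel]
      rw [← sup_assoc, sup_eq_left.mpr (hd (Nat.zero_le j))]
    · have hjm : j < m := by omega
      simp only [if_neg (by omega : j + 1 ≠ 0), if_neg (by omega : j + 1 ≠ m + 1),
        if_neg h0, if_neg hm]
      have e : j - 1 + 1 = j := by omega
      rw [Nat.add_sub_cancel, e, ← sup_assoc, sup_eq_left.mpr (hd (Nat.zero_le j))]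

lemma fan_chain (f : 𝕃 → ℝ) (hf : ∀ a b : 𝕃, f a + f b ≤ f (a ⊔ b) + f (a ⊓ b)) :
    ∀ (m : ℕ) (d : ℕ → 𝕃) (c : 𝕃), Monotone d →
      f c + ∑ j ∈ range m, f (d j) ≤ ∑ j ∈ range (m + 1), f (fanE m d c j) := by
  intro m
  induction m with
  | zero => intro d c _; simp [fanE]
  | succ m IH =>
    intro d c hd
    have hd' : Monotone (fun i => d (i + 1)) := fun i j h => hd (by omega)
    calc f c + ∑ j ∈ range (m + 1), f (d j)
        = (f c + f (d 0)) + ∑ j ∈ range m, f (d (j + 1)) := by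
          rw [sum_range_succ']; ring
      _ ≤ (f (c ⊔ d 0) + f (c ⊓ d 0)) + ∑ j ∈ range m, f (d (j + 1)) :=
          add_le_add_left (hf c (d 0)) _
      _ = f (d 0 ⊓ c) + (f (d 0 ⊔ c) + ∑ j ∈ range m, f (d (j + 1))) := by
          rw [sup_comm, inf_comm]; ring
      _ ≤ f (d 0 ⊓ c) + ∑ j ∈ range (m + 1), f (fanE m (fun i => d (i + 1)) (d 0 ⊔ c) j) :=
          add_le_add le_rfl (IH _ _ hd')
      _ = ∑ j ∈ range (m + 1 + 1), f (fanE (m + 1) d c j) := by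
          rw [sum_range_succ' (fun j => f (fanE (m + 1) d c j)) (m + 1)]
          have h0 : fanE (m + 1) d c 0 = d 0 ⊓ c := by simp [fanE]
          have hsum : ∑ j ∈ range (m + 1), f (fanE (m + 1) d c (j + 1))
              = ∑ j ∈ range (m + 1), f (fanE m (fun i => d (i + 1)) (d 0 ⊔ c) j) :=
            sum_congr rfl fun j hj => by
              rw [fanE_succ m d c hd j (Nat.lt_succ_iff.mp (mem_range.mp hj))]
          rw [h0, hsum]; ring

lemma fanD_insert [DecidableEq ι] (a : ι → 𝕃) (A : Finset ι) {i : ι} (hi : i ∉ A)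
    (hA : A.Nonempty) (j : ℕ) (hj : j ≤ A.card) :
    fanD a (insert i A) j = fanE A.card (fanD a A) (a i) j := by
  have hm : A.card ≠ 0 := hA.card_pos.ne'
  have hcard : (insert i A).card = A.card + 1 := card_insert_of_notMem hi
  have hset := powersetCard_succ_insert hi j
  have hne : ((insert i A).powersetCard (j + 1)).Nonempty := powersetCard_nonempty.2 (by omega)
  have hne' : (A.powersetCard (j + 1) ∪ (A.powersetCard j).image (insert i)).Nonempty :=
    hset ▸ hne
  have step1 : fanD a (insert i A) j
      = (A.powersetCard (j + 1) ∪ (A.powersetCard j).image (insert i)).inf' hne' (fanG a) := by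
    rw [fanD, dif_pos (by omega)]
    exact inf'_congr hne hset fun _ _ => rfl
  rw [step1]
  rcases Nat.eq_zero_or_pos j with h0 | h0
  · subst h0
    have h₁ : (A.powersetCard 1).Nonempty := powersetCard_nonempty.2 (by omega)
    have himg : ((A.powersetCard 0).image (insert i)).Nonempty :=
      (powersetCard_nonempty.2 (by omega)).image _
    rw [inf'_union h₁ himg]
    have h2 : ((A.powersetCard 0).image (insert i)).inf' himg (fanG a) = a i := by
      rw [inf'_image himg (fanG a)]
      have h00 : (A.powersetCard 0).Nonempty := powersetCard_nonempty.2 (by omega)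
      have : ∀ S ∈ A.powersetCard 0, ((fanG a) ∘ (insert i)) S = a i := by
        intro S hS
        have : S = ∅ := by simpa [powersetCard_zero] using hS
        subst this
        rw [Function.comp_apply, show (insert i (∅ : Finset ι)) = {i} from rfl,
          fanG_eq a (singleton_nonempty i), sup'_singleton]
      rw [inf'_congr himg.of_image rfl this, inf'_const]
    rw [h2, show fanE (A.card) (fanD a A) (a i) 0 = fanD a A 0 ⊓ a i by simp [fanE, hm]]
    congr 1
    rw [fanD, dif_pos (by omega : 0 + 1 ≤ A.card)]
  · -- j ≥ 1
    have himg : ((A.powersetCard j).image (insert i)).Nonempty :=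
      (powersetCard_nonempty.2 (by omega)).image _
    have himg' : ((A.powersetCard j).image (insert i)).inf' himg (fanG a)
        = fanD a A (j - 1) ⊔ a i := by
      rw [inf'_image himg (fanG a)]
      have hpc : (A.powersetCard j).Nonempty := powersetCard_nonempty.2 (by omega)
      have e1 : ∀ S ∈ A.powersetCard j, ((fanG a) ∘ (insert i)) S = fanG a S ⊔ a i := by
        intro S hS
        have hSne : S.Nonempty := card_pos.mp (by rw [(mem_powersetCard.mp hS).2]; omega)
        rw [Function.comp_apply, fanG_eq a (insert_nonempty i S), sup'_insert, fanG_eq a hSne,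
          sup_comm]
      rw [inf'_congr himg.of_image rfl e1, ← inf'_sup_distrib_right]
      congr 1
      rw [fanD, dif_pos (by omega : j - 1 + 1 ≤ A.card)]
      have e2 : j - 1 + 1 = j := by omega
      exact inf'_congr (powersetCard_nonempty.2 (by omega)) (by rw [e2]) fun _ _ => rfl
    rcases eq_or_lt_of_le hj with hjm | hjm
    · -- j = A.card : first part of the union is empty
      have hempty : A.powersetCard (j + 1) = ∅ := powersetCard_eq_empty.2 (by omega)
      have hred : (A.powersetCard (j + 1) ∪ (A.powersetCard j).image (insert i)).inf' hne'
          (fanG a) = ((A.powersetCard j).image (insert i)).inf' himg (fanG a) :=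
        inf'_congr hne' (by rw [hempty, empty_union]) fun _ _ => rfl
      rw [hred, himg']
      simp only [fanE, if_neg (by omega : j ≠ 0), if_pos hjm]
      rw [hjm]
    · have h₁ : (A.powersetCard (j + 1)).Nonempty := powersetCard_nonempty.2 (by omega)
      rw [inf'_union h₁ himg, himg']
      simp only [fanE, if_neg (by omega : j ≠ 0), if_neg (by omega : j ≠ A.card)]
      congr 1
      rw [fanD, dif_pos (by omega : j + 1 ≤ A.card)]

lemma fan_main [DecidableEq ι] (f : 𝕃 → ℝ)
    (hf : ∀ a b : 𝕃, f a + f b ≤ f (a ⊔ b) + f (a ⊓ b)) (a : ι → 𝕃) :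
    ∀ A : Finset ι, A.Nonempty →
      ∑ i ∈ A, f (a i) ≤ ∑ j ∈ range A.card, f (fanD a A j) := by
  intro A
  induction A using Finset.cons_induction with
  | empty => intro h; simp at h
  | cons i A hi IH =>
    intro _
    by_cases hA : A.Nonempty
    · rw [sum_cons, cons_eq_insert]
      have hcard : (insert i A).card = A.card + 1 := card_insert_of_notMem hi
      calc f (a i) + ∑ x ∈ A, f (a x)
          ≤ f (a i) + ∑ j ∈ range A.card, f (fanD a A j) := add_le_add le_rfl (IH hA)
        _ ≤ ∑ j ∈ range (A.card + 1), f (fanE A.card (fanD a A) (a i) j) :=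
            fan_chain f hf A.card (fanD a A) (a i) (fanD_mono a A)
        _ = ∑ j ∈ range ((insert i A).card), f (fanD a (insert i A) j) := by
            rw [hcard]
            exact sum_congr rfl fun j hj =>
              congrArg f (fanD_insert a A hi hA j (Nat.lt_succ_iff.mp (mem_range.mp hj))).symm
    · rw [not_nonempty_iff_eq_empty] at hA
      subst hA
      rw [cons_eq_insert, LawfulSingleton.insert_empty_eq]
      have h1 : ({i} : Finset ι).card = 1 := card_singleton i
      rw [sum_singleton, h1]
      have hGi : fanG a {i} = a i := by
        rw [fanG_eq a (singleton_nonempty i), sup'_singleton]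
      have hD : fanD a {i} 0 = a i := by
        rw [fanD, dif_pos (by omega)]
        have hpc : ({i} : Finset ι).powersetCard (0 + 1) = {{i}} := by
          rw [show (0 + 1) = ({i} : Finset ι).card from rfl, powersetCard_self]
        refine le_antisymm
          (le_of_le_of_eq (inf'_le _ (by rw [hpc]; exact mem_singleton_self _)) hGi) ?_
        refine le_inf' _ _ fun T hT => ?_
        rw [hpc, mem_singleton] at hT
        subst hT
        rw [hGi]
      rw [sum_range_one, hD]

lemma fan_attach_inf' {α β : Type*} [SemilatticeInf β] (s : Finset α)
    (h : s.attach.Nonempty) (g : α → β) :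
    s.attach.inf' h (fun t => g t.1) = s.inf' (attach_nonempty_iff.mp h) g := by
  refine le_antisymm (le_inf' _ _ fun b hb => inf'_le _ (mem_attach _ ⟨b, hb⟩))
    (le_inf' _ _ fun t _ => inf'_le _ t.2)

end FanAux

lemma fanD_powersetCard {α 𝕃 : Type*} [DecidableEq α] [DistribLattice 𝕃] [Nonempty 𝕃]
    (x : α → 𝕃) (V : Finset α) (p k j : ℕ) (hp : 1 ≤ p) (hpk : p ≤ k) (hk : k ≤ V.card)
    (h1 : (k - 1).choose p ≤ j) (h2 : j < k.choose p) :
    fanD (fanG x) (V.powersetCard p) j = fanH (fanG x) (V.powersetCard k) := by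
  have hjN : j + 1 ≤ (V.powersetCard p).card := by
    rw [card_powersetCard]
    have := Nat.choose_le_choose p hk
    omega
  have hkV : (V.powersetCard k).Nonempty := powersetCard_nonempty.2 hk
  rw [fanD, dif_pos hjN, fanH_eq _ hkV]
  apply le_antisymm
  · refine le_inf' _ _ fun t ht => ?_
    obtain ⟨htV, htc⟩ := mem_powersetCard.mp ht
    have hB : j + 1 ≤ (t.powersetCard p).card := by rw [card_powersetCard, htc]; omega
    obtain ⟨T, hTB, hTc⟩ := exists_subset_card_eq hB
    have hTmem : T ∈ (V.powersetCard p).powersetCard (j + 1) :=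
      mem_powersetCard.mpr ⟨fun s hs => by
        obtain ⟨hst, hsc⟩ := mem_powersetCard.mp (hTB hs)
        exact mem_powersetCard.mpr ⟨hst.trans htV, hsc⟩, hTc⟩
    refine le_trans (inf'_le _ hTmem) ?_
    have hTne : T.Nonempty := card_pos.mp (by omega)
    have htne : t.Nonempty := card_pos.mp (by omega)
    rw [fanG_eq _ hTne]
    refine sup'_le _ _ fun s hs => ?_
    obtain ⟨hst, hsc⟩ := mem_powersetCard.mp (hTB hs)
    have hsne : s.Nonempty := card_pos.mp (by omega)
    rw [fanG_eq x hsne, fanG_eq x htne]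
    exact sup'_le _ _ fun i hii => le_sup' x (hst hii)
  · refine le_inf' _ _ fun T hT => ?_
    obtain ⟨hTsub, hTc⟩ := mem_powersetCard.mp hT
    set U := T.biUnion id with hU
    have hTU : T ⊆ U.powersetCard p := fun s hs =>
      mem_powersetCard.mpr ⟨subset_biUnion_of_mem id hs, (mem_powersetCard.mp (hTsub hs)).2⟩
    have hUV : U ⊆ V := by
      intro i hiU
      obtain ⟨s, hsT, his⟩ := mem_biUnion.mp hiU
      exact (mem_powersetCard.mp (hTsub hsT)).1 his
    have hUk : k ≤ U.card := by
      by_contra hcon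
      push_neg at hcon
      have hcc : T.card ≤ (U.powersetCard p).card := card_le_card hTU
      rw [card_powersetCard, hTc] at hcc
      have := Nat.choose_le_choose p (show U.card ≤ k - 1 by omega)
      omega
    obtain ⟨t, htU, htc⟩ := exists_subset_card_eq hUk
    have htV : t ∈ V.powersetCard k := mem_powersetCard.mpr ⟨htU.trans hUV, htc⟩
    refine le_trans (inf'_le _ htV) ?_
    have hTne : T.Nonempty := card_pos.mp (by omega)
    have htne : t.Nonempty := card_pos.mp (by omega)
    rw [fanG_eq _ hTne, fanG_eq x htne]
    refine sup'_le _ _ fun i hit => ?_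
    obtain ⟨s, hsT, his⟩ := mem_biUnion.mp (htU hit)
    have hsne : s.Nonempty := card_pos.mp (by
      rw [(mem_powersetCard.mp (hTsub hsT)).2]; omega)
    calc x i ≤ fanG x s := by rw [fanG_eq x hsne]; exact le_sup' x his
      _ ≤ T.sup' hTne (fanG x) := le_sup' _ hsT

lemma fan_regroup (F : ℕ → ℝ) (p : ℕ) (hp : 1 ≤ p) :
    ∀ Q, p ≤ Q → ∑ j ∈ range (Q.choose p), F j
      = ∑ k ∈ Icc p Q, ∑ j ∈ Ico ((k - 1).choose p) (k.choose p), F j := by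
  intro Q hQ
  induction Q, hQ using Nat.le_induction with
  | base =>
    rw [Icc_self, sum_singleton, Nat.choose_self,
      Nat.choose_eq_zero_of_lt (by omega : p - 1 < p)]
    rfl
  | succ Q hQ IH =>
    have hQ1 : Icc p (Q + 1) = insert (Q + 1) (Icc p Q) := by
      ext m; simp only [mem_Icc, mem_insert]; omega
    rw [hQ1, sum_insert (by simp), ← IH, Nat.add_sub_cancel,
      add_comm (∑ j ∈ Ico (Q.choose p) ((Q + 1).choose p), F j),
      sum_range_add_sum_Ico F (Nat.choose_le_choose p (by omega : Q ≤ Q + 1))]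

/-- Dual Ky Fan inequality: for a supermodular `f` on a distributive lattice,
elements `x 1, …, x q`, and `1 ≤ p ≤ q`,
`∑_{|s| = p} f(⋁_{i ∈ s} x i) ≤ ∑_{k=p}^q C(k−1, p−1) f(⋀_{|t| = k} ⋁_{i ∈ t} x i)`. -/
theorem fan_inequality_dual {𝕃 : Type*} [DistribLattice 𝕃] (f : 𝕃 → ℝ)
    (hf : ∀ a b : 𝕃, f a + f b ≤ f (a ⊔ b) + f (a ⊓ b))
    (q p : ℕ) (hp : 1 ≤ p) (hpq : p ≤ q) (x : Fin q → 𝕃) :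
    ∑ s ∈ (Finset.univ.powersetCard p).attach,
      f (s.1.sup'
          (Finset.card_pos.mp
            (by
              have hs := (Finset.mem_powersetCard.mp s.2).2
              omega))
          x) ≤
      ∑ k ∈ (Finset.Icc p q).attach,
        (((k : ℕ) - 1).choose (p - 1) : ℝ) *
          f (((Finset.univ.powersetCard (k : ℕ)).attach).inf'
              (Finset.attach_nonempty_iff.mpr
                (Finset.powersetCard_nonempty.mpr
                  (by simpa using (Finset.mem_Icc.mp k.2).2)))
              (fun t => t.1.sup'
                (Finset.card_pos.mp
                  (by
                    have ht := (Finset.mem_powersetCard.mp t.2).2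
                    have hk := (Finset.mem_Icc.mp k.2).1
                    omega))
                x)) := by
  haveI : Nonempty 𝕃 := ⟨x ⟨0, by omega⟩⟩
  have hVcard : (univ : Finset (Fin q)).card = q := by simp
  -- rewrite the left-hand side
  refine le_trans (le_of_eq (sum_congr rfl (fun s _ =>
    congrArg f (fanG_eq x (card_pos.mp (by
      rw [(mem_powersetCard.mp s.2).2]; omega))).symm))) ?_
  rw [sum_attach ((univ : Finset (Fin q)).powersetCard p) (fun s => f (fanG x s))]
  have key : ∑ s ∈ (univ : Finset (Fin q)).powersetCard p, f (fanG x s)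
      ≤ ∑ k ∈ Icc p q, ((k - 1).choose (p - 1) : ℝ) *
          f (fanH (fanG x) ((univ : Finset (Fin q)).powersetCard k)) := by
    calc ∑ s ∈ (univ : Finset (Fin q)).powersetCard p, f (fanG x s)
        ≤ ∑ j ∈ range ((univ : Finset (Fin q)).powersetCard p).card,
            f (fanD (fanG x) ((univ : Finset (Fin q)).powersetCard p) j) :=
          fan_main f hf (fanG x) _ (powersetCard_nonempty.2 (by rw [hVcard]; omega))
      _ = ∑ j ∈ range (q.choose p),
            f (fanD (fanG x) ((univ : Finset (Fin q)).powersetCard p) j) := by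
          rw [card_powersetCard, hVcard]
      _ = ∑ k ∈ Icc p q, ∑ j ∈ Ico ((k - 1).choose p) (k.choose p),
            f (fanD (fanG x) ((univ : Finset (Fin q)).powersetCard p) j) :=
          fan_regroup _ p hp q hpq
      _ = ∑ k ∈ Icc p q, ((k - 1).choose (p - 1) : ℝ) *
            f (fanH (fanG x) ((univ : Finset (Fin q)).powersetCard k)) := by
          refine sum_congr rfl fun k hk => ?_
          obtain ⟨hpk, hkq⟩ := mem_Icc.mp hk
          have hconst : ∀ j ∈ Ico ((k - 1).choose p) (k.choose p),
              f (fanD (fanG x) ((univ : Finset (Fin q)).powersetCard p) j)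
                = f (fanH (fanG x) ((univ : Finset (Fin q)).powersetCard k)) := by
            intro j hj
            obtain ⟨hj1, hj2⟩ := mem_Ico.mp hj
            rw [fanD_powersetCard x univ p k j hp hpk (by omega) hj1 hj2]
          rw [sum_congr rfl hconst, sum_const, Nat.card_Ico, nsmul_eq_mul]
          congr 1
          have hpas : k.choose p - (k - 1).choose p = (k - 1).choose (p - 1) := by
            obtain ⟨k', rfl⟩ : ∃ k', k = k' + 1 := ⟨k - 1, by omega⟩
            obtain ⟨p', rfl⟩ : ∃ p', p = p' + 1 := ⟨p - 1, by omega⟩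
            simp only [Nat.add_sub_cancel]
            rw [Nat.choose_succ_succ']
            omega
          rw [hpas]
  refine le_trans key (le_of_eq ?_)
  rw [← sum_attach (Icc p q) (fun k => ((k - 1).choose (p - 1) : ℝ) *
    f (fanH (fanG x) ((univ : Finset (Fin q)).powersetCard k)))]
  refine sum_congr rfl fun k _ => ?_
  congr 1
  have hkq : (k : ℕ) ≤ q := (mem_Icc.mp k.2).2
  have hpk : p ≤ (k : ℕ) := (mem_Icc.mp k.2).1
  congr 1
  rw [fanH_eq (fanG x) (powersetCard_nonempty.2 (by omega)),
    ← fan_attach_inf' ((univ : Finset (Fin q)).powersetCard (k : ℕ))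
      (attach_nonempty_iff.mpr (powersetCard_nonempty.2 (by omega))) (fanG x)]
  refine inf'_congr _ rfl fun t _ => ?_
  exact fanG_eq x (card_pos.mp (by rw [(mem_powersetCard.mp t.2).2]; omega))
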